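/- Let 𝔤 be a Lie algebra over ℂ equipped with a symmetric bilinear form κ : 𝔤 × 𝔤 → ℂ that is invariant, i.e., κ([x,y],z) = κ(x,[y,z]) for all x, y, z ∈ 𝔤. Then there exists a Lie algebra structure over ℂ on the vector space ĝ = (𝔤 ⊗_ℂ ℂ((t))) × ℂ such that for all A, B ∈ 𝔤, f, g ∈ ℂ((t)) and a, b ∈ ℂ: [(A ⊗ f, a), (B ⊗ g, b)] = ([A,B] ⊗ (f·g), −κ(A,B)·Res(f·g')). In particular the element K = (0, 1) is central. (This is the affine Kac-Moody algebra ĝ_κ associated to 𝔤 and κ.) -/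

import Mathlib

open scoped TensorProduct

/-- The formal derivative of a Laurent series: `(f')ₙ = (n+1)·f_{n+1}`. -/
noncomputable def lderiv (f : LaurentSeries ℂ) : LaurentSeries ℂ where
  coeff n := ((n + 1 : ℤ) : ℂ) * f.coeff (n + 1)
  isPWO_support' := by
    have hsub : (Function.support fun n : ℤ => ((n + 1 : ℤ) : ℂ) * f.coeff (n + 1)) ⊆
        (fun m : ℤ => m - 1) '' Function.support f.coeff := by
      intro n hn
      refine ⟨n + 1, ?_, by ring⟩
      intro h0
      simp [Function.mem_support, h0] at hn
    exact (f.isPWO_support'.image_of_monotone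
      (fun x y hxy => by simpa using hxy : Monotone fun m : ℤ => m - 1)).mono hsub

/-- The residue of a Laurent series: the coefficient of `t⁻¹`. -/
noncomputable def lres (f : LaurentSeries ℂ) : ℂ := f.coeff (-1)

lemma lderiv_coeff (f : LaurentSeries ℂ) (n : ℤ) :
    (lderiv f).coeff n = ((n + 1 : ℤ) : ℂ) * f.coeff (n + 1) := rfl

lemma lres_add (f g : LaurentSeries ℂ) : lres (f + g) = lres f + lres g := by
  simp [lres]

lemma lres_neg (f : LaurentSeries ℂ) : lres (-f) = - lres f := by
  simp [lres]

lemma lres_sub (f g : LaurentSeries ℂ) : lres (f - g) = lres f - lres g := by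
  simp [lres]

lemma lres_smul (c : ℂ) (f : LaurentSeries ℂ) : lres (c • f) = c * lres f := by
  simp [lres]

lemma lderiv_add (f g : LaurentSeries ℂ) : lderiv (f + g) = lderiv f + lderiv g := by
  ext n
  simp [lderiv_coeff]
  ring

lemma lderiv_smul (c : ℂ) (f : LaurentSeries ℂ) : lderiv (c • f) = c • lderiv f := by
  ext n
  simp [lderiv_coeff]
  ring

lemma lres_lderiv (f : LaurentSeries ℂ) : lres (lderiv f) = 0 := by
  simp [lres, lderiv_coeff]

lemma lderiv_mul (f g : LaurentSeries ℂ) :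
    lderiv (f * g) = f * lderiv g + lderiv f * g := by
  ext n
  rw [HahnSeries.coeff_add, lderiv_coeff]
  have h1 : (f * lderiv g).coeff n =
      ∑ p ∈ Finset.antidiagonal f.isPWO_support g.isPWO_support (n + 1),
        f.coeff p.1 * (((p.2 : ℤ) : ℂ) * g.coeff p.2) := by
    rw [HahnSeries.coeff_mul]
    refine Finset.sum_bij_ne_zero (fun p _ _ => (p.1, p.2 + 1)) ?_ ?_ ?_ ?_
    · rintro ⟨i, j⟩ hp hne
      rw [Finset.mem_antidiagonal] at hp ⊢
      obtain ⟨hi, hj, hsum⟩ := hp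
      refine ⟨hi, ?_, by dsimp only; omega⟩
      intro h0
      exact hne (by simp [lderiv_coeff, h0])
    · rintro ⟨i₁, j₁⟩ _ _ ⟨i₂, j₂⟩ _ _ h
      simp only [Prod.mk.injEq] at h ⊢
      omega
    · rintro ⟨i, j⟩ hp hne
      rw [Finset.mem_antidiagonal] at hp
      obtain ⟨hi, hj, hsum⟩ := hp
      refine ⟨(i, j - 1), ?_, ?_, by simp⟩
      · rw [Finset.mem_antidiagonal]
        refine ⟨hi, ?_, by omega⟩
        rw [HahnSeries.mem_support, lderiv_coeff]
        have hj1 : j - 1 + 1 = j := by ring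
        rw [hj1]
        intro h0
        exact hne (by rw [h0, mul_zero])
      · rw [lderiv_coeff]
        have hj1 : j - 1 + 1 = j := by ring
        rw [hj1]
        exact hne
    · rintro ⟨i, j⟩ _ _
      rw [lderiv_coeff]
  have h2 : (lderiv f * g).coeff n =
      ∑ p ∈ Finset.antidiagonal f.isPWO_support g.isPWO_support (n + 1),
        (((p.1 : ℤ) : ℂ) * f.coeff p.1) * g.coeff p.2 := by
    rw [HahnSeries.coeff_mul]
    refine Finset.sum_bij_ne_zero (fun p _ _ => (p.1 + 1, p.2)) ?_ ?_ ?_ ?_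
    · rintro ⟨i, j⟩ hp hne
      rw [Finset.mem_antidiagonal] at hp ⊢
      obtain ⟨hi, hj, hsum⟩ := hp
      refine ⟨?_, hj, by dsimp only; omega⟩
      intro h0
      exact hne (by simp [lderiv_coeff, h0])
    · rintro ⟨i₁, j₁⟩ _ _ ⟨i₂, j₂⟩ _ _ h
      simp only [Prod.mk.injEq] at h ⊢
      omega
    · rintro ⟨i, j⟩ hp hne
      rw [Finset.mem_antidiagonal] at hp
      obtain ⟨hi, hj, hsum⟩ := hp
      refine ⟨(i - 1, j), ?_, ?_, by simp⟩
      · rw [Finset.mem_antidiagonal]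
        refine ⟨?_, hj, by omega⟩
        rw [HahnSeries.mem_support, lderiv_coeff]
        have hi1 : i - 1 + 1 = i := by ring
        rw [hi1]
        intro h0
        exact hne (by rw [h0, zero_mul])
      · rw [lderiv_coeff]
        have hi1 : i - 1 + 1 = i := by ring
        rw [hi1]
        exact hne
    · rintro ⟨i, j⟩ _ _
      rw [lderiv_coeff]
  rw [h1, h2, HahnSeries.coeff_mul, Finset.mul_sum, ← Finset.sum_add_distrib]
  refine Finset.sum_congr rfl ?_
  rintro ⟨i, j⟩ hp
  rw [Finset.mem_antidiagonal] at hp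
  have : ((n + 1 : ℤ) : ℂ) = ((i : ℂ) + (j : ℂ)) := by
    rw [← hp.2.2]; push_cast; ring
  rw [this]; ring

lemma lres_skew (f g : LaurentSeries ℂ) :
    lres (f * lderiv g) = - lres (g * lderiv f) := by
  have key : f * lderiv g = -(g * lderiv f) + lderiv (f * g) := by
    rw [lderiv_mul]; ring
  rw [key, lres_add, lres_neg, lres_lderiv, add_zero]

lemma lres_three (f g h : LaurentSeries ℂ) :
    lres (f * lderiv (g * h)) =
      lres ((f * g) * lderiv h) - lres (g * lderiv (f * h)) := by
  have key : f * lderiv (g * h) =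
      (f * g) * lderiv h - g * lderiv (f * h) + lderiv (f * (g * h)) := by
    simp only [lderiv_mul]; ring
  rw [key, lres_add, lres_sub, lres_lderiv, add_zero]

lemma lsmul_mul (c : ℂ) (f g : LaurentSeries ℂ) : (c • f) * g = c • (f * g) := by
  have hsub : (c • f).support ⊆ f.support := by
    intro n hn
    rw [HahnSeries.mem_support] at hn ⊢
    intro h0
    rw [HahnSeries.coeff_smul, h0, smul_zero] at hn
    exact hn rfl
  ext a
  rw [HahnSeries.coeff_smul, HahnSeries.coeff_mul_left' f.isPWO_support hsub,
    HahnSeries.coeff_mul, Finset.smul_sum]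
  refine Finset.sum_congr rfl fun p _ => ?_
  rw [HahnSeries.coeff_smul]
  simp [mul_assoc]

lemma lmul_smul (c : ℂ) (f g : LaurentSeries ℂ) : f * (c • g) = c • (f * g) := by
  have hsub : (c • g).support ⊆ g.support := by
    intro n hn
    rw [HahnSeries.mem_support] at hn ⊢
    intro h0
    rw [HahnSeries.coeff_smul, h0, smul_zero] at hn
    exact hn rfl
  ext a
  rw [HahnSeries.coeff_smul, HahnSeries.coeff_mul_right' g.isPWO_support hsub,
    HahnSeries.coeff_mul, Finset.smul_sum]
  refine Finset.sum_congr rfl fun p _ => ?_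
  rw [HahnSeries.coeff_smul]
  simp
  ring

section Aux

variable (𝔤 : Type) [LieRing 𝔤] [LieAlgebra ℂ 𝔤]

/-- Inner bracket map: `(A ⊗ f) ↦ (B ⊗ g ↦ ⁅A,B⁆ ⊗ fg)`. -/
noncomputable def brIn (A : 𝔤) (f : LaurentSeries ℂ) :
    (𝔤 ⊗[ℂ] LaurentSeries ℂ) →ₗ[ℂ] (𝔤 ⊗[ℂ] LaurentSeries ℂ) :=
  TensorProduct.lift <| LinearMap.mk₂ ℂ (fun B g => ⁅A, B⁆ ⊗ₜ[ℂ] (f * g))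
    (fun B B' g => by rw [lie_add, TensorProduct.add_tmul])
    (fun c B g => by rw [lie_smul, TensorProduct.smul_tmul'])
    (fun B g g' => by rw [mul_add, TensorProduct.tmul_add])
    (fun c B g => by rw [lmul_smul, TensorProduct.tmul_smul])

@[simp] lemma brIn_tmul (A B : 𝔤) (f g : LaurentSeries ℂ) :
    brIn 𝔤 A f (B ⊗ₜ[ℂ] g) = ⁅A, B⁆ ⊗ₜ[ℂ] (f * g) := by
  simp [brIn]

/-- The Lie bracket on `𝔤 ⊗ ℂ((t))` as a bilinear map. -/
noncomputable def brL :
    (𝔤 ⊗[ℂ] LaurentSeries ℂ) →ₗ[ℂ] (𝔤 ⊗[ℂ] LaurentSeries ℂ) →ₗ[ℂ]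
      (𝔤 ⊗[ℂ] LaurentSeries ℂ) :=
  TensorProduct.lift <| LinearMap.mk₂ ℂ (brIn 𝔤)
    (fun A A' f => TensorProduct.ext' fun B g => by
      simp [add_lie, TensorProduct.add_tmul])
    (fun c A f => TensorProduct.ext' fun B g => by
      simp [smul_lie, TensorProduct.smul_tmul'])
    (fun A f f' => TensorProduct.ext' fun B g => by
      simp [add_mul, TensorProduct.tmul_add])
    (fun c A f => TensorProduct.ext' fun B g => by
      simp only [LinearMap.smul_apply, brIn_tmul, lsmul_mul,
        TensorProduct.tmul_smul])

@[simp] lemma brL_tmul (A B : 𝔤) (f g : LaurentSeries ℂ) :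
    brL 𝔤 (A ⊗ₜ[ℂ] f) (B ⊗ₜ[ℂ] g) = ⁅A, B⁆ ⊗ₜ[ℂ] (f * g) := by
  simp [brL]

variable (κ : 𝔤 →ₗ[ℂ] 𝔤 →ₗ[ℂ] ℂ)

/-- Inner cocycle map. -/
noncomputable def ccIn (A : 𝔤) (f : LaurentSeries ℂ) :
    (𝔤 ⊗[ℂ] LaurentSeries ℂ) →ₗ[ℂ] ℂ :=
  TensorProduct.lift <| LinearMap.mk₂ ℂ
    (fun B g => -(κ A B) * lres (f * lderiv g))
    (fun B B' g => by rw [map_add]; ring)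
    (fun c B g => by rw [map_smul]; simp only [LinearMap.smul_apply, smul_eq_mul]; ring)
    (fun B g g' => by
      rw [lderiv_add, mul_add, lres_add]; ring)
    (fun c B g => by
      rw [lderiv_smul, lmul_smul, lres_smul]
      simp only [smul_eq_mul]; ring)

@[simp] lemma ccIn_tmul (A B : 𝔤) (f g : LaurentSeries ℂ) :
    ccIn 𝔤 κ A f (B ⊗ₜ[ℂ] g) = -(κ A B) * lres (f * lderiv g) := by
  simp [ccIn]

/-- The 2-cocycle on `𝔤 ⊗ ℂ((t))` as a bilinear map. -/
noncomputable def ccL :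
    (𝔤 ⊗[ℂ] LaurentSeries ℂ) →ₗ[ℂ] (𝔤 ⊗[ℂ] LaurentSeries ℂ) →ₗ[ℂ] ℂ :=
  TensorProduct.lift <| LinearMap.mk₂ ℂ (ccIn 𝔤 κ)
    (fun A A' f => TensorProduct.ext' fun B g => by
      simp only [ccIn_tmul, map_add, LinearMap.add_apply]; ring)
    (fun c A f => TensorProduct.ext' fun B g => by
      simp only [ccIn_tmul, map_smul, LinearMap.smul_apply, smul_eq_mul]; ring)
    (fun A f f' => TensorProduct.ext' fun B g => by
      simp only [ccIn_tmul, add_mul, lres_add, LinearMap.add_apply]; ring)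
    (fun c A f => TensorProduct.ext' fun B g => by
      simp only [ccIn_tmul, lsmul_mul, lres_smul, LinearMap.smul_apply,
        smul_eq_mul]; ring)

@[simp] lemma ccL_tmul (A B : 𝔤) (f g : LaurentSeries ℂ) :
    ccL 𝔤 κ (A ⊗ₜ[ℂ] f) (B ⊗ₜ[ℂ] g) = -(κ A B) * lres (f * lderiv g) := by
  simp [ccL]

lemma brL_skew (u v : 𝔤 ⊗[ℂ] LaurentSeries ℂ) :
    brL 𝔤 u v + brL 𝔤 v u = 0 := by
  have h : ∀ A B (f g : LaurentSeries ℂ),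
      brL 𝔤 (A ⊗ₜ[ℂ] f) (B ⊗ₜ[ℂ] g) + brL 𝔤 (B ⊗ₜ[ℂ] g) (A ⊗ₜ[ℂ] f) = 0 := by
    intro A B f g
    rw [brL_tmul, brL_tmul, mul_comm g f, ← TensorProduct.add_tmul, ← lie_skew A B,
      neg_add_cancel, TensorProduct.zero_tmul]
  induction u using TensorProduct.induction_on with
  | zero => simp
  | tmul A f =>
    induction v using TensorProduct.induction_on with
    | zero => simp
    | tmul B g => exact h A B f g
    | add v1 v2 h1 h2 =>
      simp only [map_add, LinearMap.add_apply] at h1 h2 ⊢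
      rw [show ∀ a b c d : 𝔤 ⊗[ℂ] LaurentSeries ℂ,
        a + b + (c + d) = (a + c) + (b + d) from fun a b c d => by abel]
      rw [h1, h2, add_zero]
  | add u1 u2 h1 h2 =>
    simp only [map_add, LinearMap.add_apply] at h1 h2 ⊢
    rw [show ∀ a b c d : 𝔤 ⊗[ℂ] LaurentSeries ℂ,
      a + b + (c + d) = (a + c) + (b + d) from fun a b c d => by abel]
    rw [h1, h2, add_zero]

lemma ccL_skew (hsym : ∀ x y : 𝔤, κ x y = κ y x) (u v : 𝔤 ⊗[ℂ] LaurentSeries ℂ) :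
    ccL 𝔤 κ u v + ccL 𝔤 κ v u = 0 := by
  induction u using TensorProduct.induction_on with
  | zero => simp
  | tmul A f =>
    induction v using TensorProduct.induction_on with
    | zero => simp
    | tmul B g =>
      rw [ccL_tmul, ccL_tmul, hsym B A]
      linear_combination (-(κ A B)) * lres_skew f g
    | add v1 v2 h1 h2 =>
      simp only [map_add, LinearMap.add_apply] at h1 h2 ⊢
      linear_combination h1 + h2
  | add u1 u2 h1 h2 =>
    simp only [map_add, LinearMap.add_apply] at h1 h2 ⊢
    linear_combination h1 + h2

lemma brL_jacobi (u v w : 𝔤 ⊗[ℂ] LaurentSeries ℂ) :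
    brL 𝔤 u (brL 𝔤 v w) = brL 𝔤 (brL 𝔤 u v) w + brL 𝔤 v (brL 𝔤 u w) := by
  induction u using TensorProduct.induction_on with
  | zero => simp
  | add u1 u2 h1 h2 =>
    simp only [map_add, LinearMap.add_apply] at h1 h2 ⊢
    rw [h1, h2]; abel
  | tmul A f =>
    induction v using TensorProduct.induction_on with
    | zero => simp
    | add v1 v2 h1 h2 =>
      simp only [map_add, LinearMap.add_apply] at h1 h2 ⊢
      rw [h1, h2]; abel
    | tmul B g =>
      induction w using TensorProduct.induction_on with
      | zero => simp
      | add w1 w2 h1 h2 =>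
        simp only [map_add, LinearMap.add_apply] at h1 h2 ⊢
        rw [h1, h2]; abel
      | tmul C h =>
        rw [brL_tmul, brL_tmul, brL_tmul, brL_tmul, brL_tmul, leibniz_lie,
          TensorProduct.add_tmul]
        congr 2
        · ring
        · ring

lemma ccL_jacobi (hinv : ∀ x y z : 𝔤, κ ⁅x, y⁆ z = κ x ⁅y, z⁆)
    (u v w : 𝔤 ⊗[ℂ] LaurentSeries ℂ) :
    ccL 𝔤 κ u (brL 𝔤 v w) = ccL 𝔤 κ (brL 𝔤 u v) w + ccL 𝔤 κ v (brL 𝔤 u w) := by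
  induction u using TensorProduct.induction_on with
  | zero => simp
  | add u1 u2 h1 h2 =>
    simp only [map_add, LinearMap.add_apply] at h1 h2 ⊢
    linear_combination h1 + h2
  | tmul A f =>
    induction v using TensorProduct.induction_on with
    | zero => simp
    | add v1 v2 h1 h2 =>
      simp only [map_add, LinearMap.add_apply] at h1 h2 ⊢
      linear_combination h1 + h2
    | tmul B g =>
      induction w using TensorProduct.induction_on with
      | zero => simp
      | add w1 w2 h1 h2 =>
        simp only [map_add, LinearMap.add_apply] at h1 h2 ⊢
        linear_combination h1 + h2
      | tmul C h =>
        rw [brL_tmul, brL_tmul, brL_tmul, ccL_tmul, ccL_tmul, ccL_tmul]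
        have e1 : κ A ⁅B, C⁆ = κ ⁅A, B⁆ C := (hinv A B C).symm
        have e2 : κ B ⁅A, C⁆ = -κ ⁅A, B⁆ C := by
          rw [← hinv B A C, neg_eq_iff_eq_neg.mp (lie_skew A B), map_neg,
            LinearMap.neg_apply]
        rw [e1, e2, lres_three f g h]
        ring

end Aux

theorem stmt_8 (𝔤 : Type) [LieRing 𝔤] [LieAlgebra ℂ 𝔤]
    (κ : 𝔤 →ₗ[ℂ] 𝔤 →ₗ[ℂ] ℂ)
    (hsym : ∀ x y : 𝔤, κ x y = κ y x)
    (hinv : ∀ x y z : 𝔤, κ ⁅x, y⁆ z = κ x ⁅y, z⁆) :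
    ∃ B : ((𝔤 ⊗[ℂ] LaurentSeries ℂ) × ℂ) →ₗ[ℂ] ((𝔤 ⊗[ℂ] LaurentSeries ℂ) × ℂ) →ₗ[ℂ]
        ((𝔤 ⊗[ℂ] LaurentSeries ℂ) × ℂ),
      (∀ x, B x x = 0) ∧
      (∀ x y z, B x (B y z) = B (B x y) z + B y (B x z)) ∧
      (∀ (A A' : 𝔤) (f g : LaurentSeries ℂ) (a b : ℂ),
        B (A ⊗ₜ[ℂ] f, a) (A' ⊗ₜ[ℂ] g, b) =
          (⁅A, A'⁆ ⊗ₜ[ℂ] (f * g), -(κ A A') * lres (f * lderiv g))) ∧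
      (∀ x, B ((0 : 𝔤 ⊗[ℂ] LaurentSeries ℂ), (1 : ℂ)) x = 0) := by
  refine ⟨LinearMap.mk₂ ℂ (fun x y => (brL 𝔤 x.1 y.1, ccL 𝔤 κ x.1 y.1))
    (fun x x' y => by simp [Prod.fst_add, map_add, Prod.mk_add_mk])
    (fun c x y => by simp [Prod.smul_fst, map_smul, Prod.smul_mk])
    (fun x y y' => by simp [Prod.fst_add, map_add, Prod.mk_add_mk])
    (fun c x y => by simp [Prod.smul_fst, map_smul, Prod.smul_mk]),
    ?_, ?_, ?_, ?_⟩
  · intro x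
    simp only [LinearMap.mk₂_apply]
    have hb : brL 𝔤 x.1 x.1 = 0 := by
      have h2 : (2 : ℂ) • brL 𝔤 x.1 x.1 = 0 := by
        rw [two_smul]; exact brL_skew 𝔤 x.1 x.1
      have := smul_eq_zero.mp h2
      simpa using this.resolve_left (by norm_num)
    have hc : ccL 𝔤 κ x.1 x.1 = 0 := by
      have h2 := ccL_skew 𝔤 κ hsym x.1 x.1
      linear_combination h2 / 2
    rw [hb, hc]; rfl
  · intro x y z
    simp only [LinearMap.mk₂_apply, Prod.mk_add_mk]
    rw [brL_jacobi 𝔤 x.1 y.1 z.1, ccL_jacobi 𝔤 κ hinv x.1 y.1 z.1]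
  · intro A A' f g a b
    simp only [LinearMap.mk₂_apply, brL_tmul, ccL_tmul]
  · intro x
    simp only [LinearMap.mk₂_apply, map_zero, LinearMap.zero_apply]
    rfl
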